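/- Let H₀, H₁, H₂ be open hemispheres of Sⁿ, defined by nonzero linear functionals ℓ₀, ℓ₁, ℓ₂, with H₁ not antipodal to H₂ (i.e. ℓ₂ is not a negative multiple of ℓ₁). If H₀ ∩ H₁ and H₀ ∩ H₂ are disjoint, then the antipodal hemisphere ι(H₀) = {x : ℓ₀(x) < 0} is contained in H₁ ∪ H₂. -/

import Mathlib

/-- The open hemisphere of the unit sphere `Sⁿ ⊂ ℝ^{n+1}` defined by a linear
functional `ℓ`. -/
def hemisphere (n : ℕ) (ℓ : EuclideanSpace ℝ (Fin (n + 1)) →ₗ[ℝ] ℝ) :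
    Set (EuclideanSpace ℝ (Fin (n + 1))) :=
  {x | x ∈ Metric.sphere (0 : EuclideanSpace ℝ (Fin (n + 1))) 1 ∧ ℓ x > 0}

lemma exists_pos_pos {E : Type*} [AddCommGroup E] [Module ℝ E]
    (ℓ₁ ℓ₂ : E →ₗ[ℝ] ℝ) (hℓ₁ : ℓ₁ ≠ 0) (hℓ₂ : ℓ₂ ≠ 0)
    (hna : ∀ c : ℝ, c < 0 → ℓ₂ ≠ c • ℓ₁) :
    ∃ y, 0 < ℓ₁ y ∧ 0 < ℓ₂ y := by
  by_contra h
  push_neg at h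
  -- get u with ℓ₁ u > 0
  obtain ⟨u₀, hu₀⟩ : ∃ u, ℓ₁ u ≠ 0 := by
    by_contra hc; push_neg at hc
    exact hℓ₁ (LinearMap.ext fun v => by simp [hc v])
  obtain ⟨u, hu⟩ : ∃ u, 0 < ℓ₁ u := by
    rcases lt_or_gt_of_ne hu₀ with h1 | h1
    · exact ⟨-u₀, by simp; linarith⟩
    · exact ⟨u₀, h1⟩
  -- ker ℓ₁ ⊆ ker ℓ₂
  have hker : ∀ v, ℓ₁ v = 0 → ℓ₂ v = 0 := by
    intro v hv
    by_contra hv2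
    set t := (1 - ℓ₂ u) / ℓ₂ v with ht
    have h1 : ℓ₁ (u + t • v) = ℓ₁ u := by simp [hv]
    have h2 : ℓ₂ (u + t • v) = 1 := by
      simp only [map_add, map_smul, smul_eq_mul, ht]
      field_simp
      ring
    have := h (u + t • v) (by rw [h1]; exact hu)
    rw [h2] at this; linarith
  set c := ℓ₂ u / ℓ₁ u with hc
  have hceq : ℓ₂ = c • ℓ₁ := by
    ext v
    have hkv : ℓ₁ (v - (ℓ₁ v / ℓ₁ u) • u) = 0 := by
      simp only [map_sub, map_smul, smul_eq_mul]
      field_simp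
      ring
    have := hker _ hkv
    simp only [map_sub, map_smul, smul_eq_mul, sub_eq_zero] at this
    simp only [LinearMap.smul_apply, smul_eq_mul, this, hc]
    field_simp
  have hcle : c ≤ 0 := by
    have := h u hu
    exact div_nonpos_of_nonpos_of_nonneg this hu.le
  rcases eq_or_lt_of_le hcle with hc0 | hc0
  · apply hℓ₂
    rw [hceq, hc0]; simp
  · exact hna c hc0 hceq

/-- Let `H₀, H₁, H₂` be open hemispheres with `H₁` not antipodal to `H₂` (`ℓ₂` is not a
negative multiple of `ℓ₁`). If `H₀ ∩ H₁` and `H₀ ∩ H₂` are disjoint, then the antipodal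
hemisphere `ι(H₀) = {ℓ₀ < 0}` is contained in `H₁ ∪ H₂`. -/
theorem antipodal_subset_union (n : ℕ) (hn : 1 ≤ n)
    (ℓ₀ ℓ₁ ℓ₂ : EuclideanSpace ℝ (Fin (n + 1)) →ₗ[ℝ] ℝ)
    (hℓ₀ : ℓ₀ ≠ 0) (hℓ₁ : ℓ₁ ≠ 0) (hℓ₂ : ℓ₂ ≠ 0)
    (hna : ∀ c : ℝ, c < 0 → ℓ₂ ≠ c • ℓ₁)
    (hdisj : (hemisphere n ℓ₀ ∩ hemisphere n ℓ₁) ∩ (hemisphere n ℓ₀ ∩ hemisphere n ℓ₂) = ∅) :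
    {x | x ∈ Metric.sphere (0 : EuclideanSpace ℝ (Fin (n + 1))) 1 ∧ ℓ₀ x < 0}
      ⊆ hemisphere n ℓ₁ ∪ hemisphere n ℓ₂ := by
  -- From disjointness: no nonzero z has all three functionals positive.
  have key : ∀ z : EuclideanSpace ℝ (Fin (n + 1)),
      0 < ℓ₀ z → 0 < ℓ₁ z → 0 < ℓ₂ z → False := by
    intro z h0 h1 h2
    have hz : z ≠ 0 := by
      rintro rfl; simp at h0
    have hnz : (0 : ℝ) < ‖z‖ := norm_pos_iff.2 hz
    set w := ‖z‖⁻¹ • z with hw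
    have hws : w ∈ Metric.sphere (0 : EuclideanSpace ℝ (Fin (n + 1))) 1 := by
      simp [hw, norm_smul, abs_of_pos (inv_pos.2 hnz), inv_mul_cancel₀ hnz.ne']
    have hpos : ∀ (ℓ : EuclideanSpace ℝ (Fin (n + 1)) →ₗ[ℝ] ℝ), 0 < ℓ z → 0 < ℓ w := by
      intro ℓ hl
      simp only [hw, map_smul, smul_eq_mul]
      positivity
    have : w ∈ (hemisphere n ℓ₀ ∩ hemisphere n ℓ₁) ∩ (hemisphere n ℓ₀ ∩ hemisphere n ℓ₂) :=
      ⟨⟨⟨hws, hpos _ h0⟩, ⟨hws, hpos _ h1⟩⟩, ⟨⟨hws, hpos _ h0⟩, ⟨hws, hpos _ h2⟩⟩⟩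
    rw [hdisj] at this
    exact this
  rintro x ⟨hxs, hx0⟩
  by_contra hx
  simp only [Set.mem_union, hemisphere, Set.mem_setOf_eq, not_or, not_and] at hx
  obtain ⟨hx1, hx2⟩ := hx
  have hx1' : ℓ₁ x ≤ 0 := not_lt.mp (hx1 hxs)
  have hx2' : ℓ₂ x ≤ 0 := not_lt.mp (hx2 hxs)
  obtain ⟨y, hy1, hy2⟩ := exists_pos_pos ℓ₁ ℓ₂ hℓ₁ hℓ₂ hna
  set ε := (-ℓ₀ x) / (2 * (|ℓ₀ y| + 1)) with hε
  have hεpos : 0 < ε := by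
    apply div_pos (by linarith) (by positivity)
  set z := -x + ε • y with hz
  have h0 : 0 < ℓ₀ z := by
    simp only [hz, map_add, map_neg, map_smul, smul_eq_mul]
    have h1 : ε * |ℓ₀ y| < -ℓ₀ x := by
      rw [hε]
      rw [div_mul_eq_mul_div, div_lt_iff₀ (by positivity)]
      nlinarith [abs_nonneg (ℓ₀ y)]
    have := neg_abs_le (ℓ₀ y)
    nlinarith [abs_nonneg (ℓ₀ y)]
  have h1 : 0 < ℓ₁ z := by
    simp only [hz, map_add, map_neg, map_smul, smul_eq_mul]
    nlinarith
  have h2 : 0 < ℓ₂ z := by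
    simp only [hz, map_add, map_neg, map_smul, smul_eq_mul]
    nlinarith
  exact key z h0 h1 h2
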